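/- arXiv:2504.00560 — 9 statements merged into one kernel-verified Lean document; each statement's English description precedes it below -/
import Mathlib

section
/- Let m, h, ω > 0 with δ := (h²ω²−30)(h²ω²−10) ≠ 0, and fix real q_ℓ, q_r. Then the unique pair (q_ξ, q_{1−ξ}) of real numbers satisfying ∂L_d/∂q_ξ = 0 and ∂L_d/∂q_{1−ξ} = 0 is q_ξ = (1/δ)[−5(h²ω²−30)(q_r+q_ℓ) + 3√5(h²ω²−10)(q_r−q_ℓ)] and q_{1−ξ} = (1/δ)[−5(h²ω²−30)(q_r+q_ℓ) − 3√5(h²ω²−10)(q_r−q_ℓ)]. -/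
/-- The discrete Lagrangian of the harmonic oscillator with mass `m`, time step `h`
and angular frequency `ω`. -/
noncomputable def Ld (m h ω qℓ qξ q1mξ qr : ℝ) : ℝ :=
  (m / (12 * h)) *
    (26 * (qℓ^2 + qr^2) - 2 * qℓ * qr + 50 * (qξ^2 - qξ * q1mξ + q1mξ^2)
      - 25 * (qℓ + qr) * (qξ + q1mξ)
      - 15 * Real.sqrt 5 * (qℓ - qr) * (qξ - q1mξ))
  - (m * h * ω^2 / 24) * (qℓ^2 + qr^2 + 5 * (qξ^2 + q1mξ^2))

lemma deriv_quadratic (A B C x : ℝ) :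
    deriv (fun t : ℝ => A * t ^ 2 + B * t + C) x = 2 * A * x + B := by
  have h1 : HasDerivAt (fun t : ℝ => A * t ^ 2 + B * t + C)
      (A * (2 * x ^ 1) + B * 1) x :=
    (((hasDerivAt_pow 2 x).const_mul A).add ((hasDerivAt_id x).const_mul B)).add_const C
  rw [h1.deriv]; ring

/-- The internal discrete Euler–Lagrange equations ∂L_d/∂q_ξ = 0, ∂L_d/∂q_{1−ξ} = 0 have
the stated explicit solution as their unique solution. -/
theorem internal_EL_unique_solution (m h ω : ℝ) (hm : 0 < m) (hh : 0 < h) (hω : 0 < ω)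
    (hδ : (h^2 * ω^2 - 30) * (h^2 * ω^2 - 10) ≠ 0) (qℓ qr : ℝ) (qξ q1mξ : ℝ) :
    (deriv (fun x => Ld m h ω qℓ x q1mξ qr) qξ = 0
      ∧ deriv (fun y => Ld m h ω qℓ qξ y qr) q1mξ = 0)
    ↔ (qξ = (1 / ((h^2 * ω^2 - 30) * (h^2 * ω^2 - 10))) *
          (-5 * (h^2 * ω^2 - 30) * (qr + qℓ) + 3 * Real.sqrt 5 * (h^2 * ω^2 - 10) * (qr - qℓ))
        ∧ q1mξ = (1 / ((h^2 * ω^2 - 30) * (h^2 * ω^2 - 10))) *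
          (-5 * (h^2 * ω^2 - 30) * (qr + qℓ) - 3 * Real.sqrt 5 * (h^2 * ω^2 - 10) * (qr - qℓ))) := by
  set s := Real.sqrt 5 with hs_def
  have hs : s ^ 2 = 5 := Real.sq_sqrt (by norm_num)
  have hm' : m ≠ 0 := hm.ne'
  have hh' : h ≠ 0 := hh.ne'
  have h30 : h^2 * ω^2 - 30 ≠ 0 := fun e => hδ (by rw [e]; ring)
  have h10 : h^2 * ω^2 - 10 ≠ 0 := fun e => hδ (by rw [e]; ring)
  have d1 : deriv (fun x => Ld m h ω qℓ x q1mξ qr) qξ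
      = 2 * (m / (12 * h) * 50 - m * h * ω^2 / 24 * 5) * qξ
        + m / (12 * h) * (-50 * q1mξ - 25 * (qℓ + qr) - 15 * s * (qℓ - qr)) := by
    have : (fun x => Ld m h ω qℓ x q1mξ qr)
        = fun x => (m / (12 * h) * 50 - m * h * ω^2 / 24 * 5) * x ^ 2
          + (m / (12 * h) * (-50 * q1mξ - 25 * (qℓ + qr) - 15 * s * (qℓ - qr))) * x
          + (m / (12 * h) * (26 * (qℓ^2 + qr^2) - 2 * qℓ * qr + 50 * q1mξ^2
              - 25 * (qℓ + qr) * q1mξ + 15 * s * (qℓ - qr) * q1mξ)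
            - m * h * ω^2 / 24 * (qℓ^2 + qr^2 + 5 * q1mξ^2)) := by
      funext x; simp only [Ld]; ring
    rw [this, deriv_quadratic]
  have d2 : deriv (fun y => Ld m h ω qℓ qξ y qr) q1mξ
      = 2 * (m / (12 * h) * 50 - m * h * ω^2 / 24 * 5) * q1mξ
        + m / (12 * h) * (-50 * qξ - 25 * (qℓ + qr) + 15 * s * (qℓ - qr)) := by
    have : (fun y => Ld m h ω qℓ qξ y qr)
        = fun y => (m / (12 * h) * 50 - m * h * ω^2 / 24 * 5) * y ^ 2
          + (m / (12 * h) * (-50 * qξ - 25 * (qℓ + qr) + 15 * s * (qℓ - qr))) * y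
          + (m / (12 * h) * (26 * (qℓ^2 + qr^2) - 2 * qℓ * qr + 50 * qξ^2
              - 25 * (qℓ + qr) * qξ - 15 * s * (qℓ - qr) * qξ)
            - m * h * ω^2 / 24 * (qℓ^2 + qr^2 + 5 * qξ^2)) := by
      funext y; simp only [Ld]; ring
    rw [this, deriv_quadratic]
  rw [d1, d2]
  constructor
  · rintro ⟨e1, e2⟩
    have E1 : (100 - 5 * (h^2 * ω^2)) * qξ - 50 * q1mξ
        - 25 * (qℓ + qr) - 15 * s * (qℓ - qr) = 0 := by
      have h' := e1
      field_simp at h'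
      apply mul_left_cancel₀ (show (288:ℝ) * m * h ≠ 0 by positivity)
      rw [mul_zero]
      linear_combination (12 * h) * h'
    have E2 : (100 - 5 * (h^2 * ω^2)) * q1mξ - 50 * qξ
        - 25 * (qℓ + qr) + 15 * s * (qℓ - qr) = 0 := by
      have h' := e2
      field_simp at h'
      apply mul_left_cancel₀ (show (288:ℝ) * m * h ≠ 0 by positivity)
      rw [mul_zero]
      linear_combination (12 * h) * h'
    constructor
    · field_simp
      linear_combination ((100 - 5 * (h^2 * ω^2)) / 25) * E1 + 2 * E2
    · field_simp
      linear_combination ((100 - 5 * (h^2 * ω^2)) / 25) * E2 + 2 * E1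
  · rintro ⟨e1, e2⟩
    rw [e1, e2]
    constructor <;>
    · field_simp
      ring
end

section
/- Let m, h, ω > 0 with δ := (h²ω²−30)(h²ω²−10) ≠ 0. For all real q_ℓ, q_r, substituting q_ξ = (1/δ)[−5(h²ω²−30)(q_r+q_ℓ) + 3√5(h²ω²−10)(q_r−q_ℓ)] and q_{1−ξ} = (1/δ)[−5(h²ω²−30)(q_r+q_ℓ) − 3√5(h²ω²−10)(q_r−q_ℓ)] into the discrete Lagrangian L_d yields L_d = L_r(q_ℓ, q_r) := (1/(6hδ))[(m/4)(−h⁶ω⁶ + 92h⁴ω⁴ − 1680h²ω² + 3600)(q_ℓ² + q_r²) − m(h⁴ω⁴ + 60h²ω² + 1800) q_ℓ q_r]. -/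
/-- Substituting the solved internal degrees of freedom into the discrete Lagrangian
yields the reduced Lagrangian L_r(q_ℓ, q_r). -/
theorem reduced_lagrangian (m h ω : ℝ) (hm : 0 < m) (hh : 0 < h) (hω : 0 < ω)
    (hδ : (h^2 * ω^2 - 30) * (h^2 * ω^2 - 10) ≠ 0) (qℓ qr : ℝ) :
    Ld m h ω qℓ
      ((1 / ((h^2 * ω^2 - 30) * (h^2 * ω^2 - 10))) *
        (-5 * (h^2 * ω^2 - 30) * (qr + qℓ) + 3 * Real.sqrt 5 * (h^2 * ω^2 - 10) * (qr - qℓ)))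
      ((1 / ((h^2 * ω^2 - 30) * (h^2 * ω^2 - 10))) *
        (-5 * (h^2 * ω^2 - 30) * (qr + qℓ) - 3 * Real.sqrt 5 * (h^2 * ω^2 - 10) * (qr - qℓ)))
      qr
    = (1 / (6 * h * ((h^2 * ω^2 - 30) * (h^2 * ω^2 - 10)))) *
        ((m/4) * (-(h^6 * ω^6) + 92 * h^4 * ω^4 - 1680 * h^2 * ω^2 + 3600) * (qℓ^2 + qr^2)
          - m * (h^4 * ω^4 + 60 * h^2 * ω^2 + 1800) * qℓ * qr) := by
  have hs : Real.sqrt 5 ^ 2 = 5 := Real.sq_sqrt (by norm_num)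
  have h30 : h^2 * ω^2 - 30 ≠ 0 := fun h0 => hδ (by rw [h0]; ring)
  have h10 : h^2 * ω^2 - 10 ≠ 0 := fun h0 => hδ (by rw [h0]; ring)
  unfold Ld
  obtain ⟨s, hg⟩ : ∃ s, Real.sqrt 5 = s := ⟨_, rfl⟩
  rw [hg] at hs ⊢
  field_simp
  linear_combination ((-1296000 * h^4 * qr^2 * ω^4) + (2592000 * h^4 * qℓ * qr * ω^4) + (18144000 * h^2 * qr^2 * ω^2) + (-36288000 * h^2 * qℓ * qr * ω^2) + (-1296000 * h^4 * qℓ^2 * ω^4) + (18144000 * h^2 * qℓ^2 * ω^2) + (-77760000 * qr^2) + (155520000 * qℓ * qr) + (-77760000 * qℓ^2) + (-51840 * h^6 * qℓ * qr * ω^6) + (25920 * h^6 * qr^2 * ω^6) + (25920 * h^6 * qℓ^2 * ω^6)) * hs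
end

section
/- Let m, h, ω > 0 with (h²ω²−30)(h²ω²−10) ≠ 0. For all real q_{j−1}, q_j, q_{j+1}, the discrete Euler–Lagrange equation ∂L_r/∂q_r(q_{j−1}, q_j) + ∂L_r/∂q_ℓ(q_j, q_{j+1}) = 0 holds if and only if (1/h²)(q_{j−1} − 2q_j + q_{j+1}) + (ω²/30)(q_{j−1} + 28q_j + q_{j+1}) + (ω⁴h²/1800)(q_{j−1} − 92q_j + q_{j+1}) + (ω⁶h⁴/1800) q_j = 0. -/
/-- The reduced Lagrangian of the harmonic oscillator with mass `m`, time step `h`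
and angular frequency `ω`. -/
noncomputable def Lr (m h ω qℓ qr : ℝ) : ℝ :=
  (1 / (6 * h * ((h^2 * ω^2 - 30) * (h^2 * ω^2 - 10)))) *
    ((m/4) * (-(h^6 * ω^6) + 92 * h^4 * ω^4 - 1680 * h^2 * ω^2 + 3600) * (qℓ^2 + qr^2)
      - m * (h^4 * ω^4 + 60 * h^2 * ω^2 + 1800) * qℓ * qr)

/-- The discrete Euler–Lagrange equation of the reduced Lagrangian is the three-point
Lobatto scheme for the harmonic oscillator. -/
theorem discrete_euler_lagrange_iff (m h ω : ℝ) (hm : 0 < m) (hh : 0 < h) (hω : 0 < ω)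
    (hδ : (h^2 * ω^2 - 30) * (h^2 * ω^2 - 10) ≠ 0) (qjm1 qj qjp1 : ℝ) :
    deriv (fun y => Lr m h ω qjm1 y) qj + deriv (fun x => Lr m h ω x qjp1) qj = 0
    ↔ (1/h^2) * (qjm1 - 2*qj + qjp1)
        + (ω^2/30) * (qjm1 + 28*qj + qjp1)
        + (ω^4 * h^2/1800) * (qjm1 - 92*qj + qjp1)
        + (ω^6 * h^4/1800) * qj = 0 := by
  set c : ℝ := 1 / (6 * h * ((h^2 * ω^2 - 30) * (h^2 * ω^2 - 10))) with hc
  set P : ℝ := -(h^6 * ω^6) + 92 * h^4 * ω^4 - 1680 * h^2 * ω^2 + 3600 with hP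
  set Q : ℝ := h^4 * ω^4 + 60 * h^2 * ω^2 + 1800 with hQ
  have hsq : ∀ q : ℝ, HasDerivAt (fun y : ℝ => y^2) (2*q) q := by
    intro q; simpa using hasDerivAt_pow 2 q
  have d1 : deriv (fun y => Lr m h ω qjm1 y) qj
      = c * ((m/4) * P * (2*qj) - m * Q * qjm1) := by
    have : HasDerivAt (fun y : ℝ => Lr m h ω qjm1 y)
        (c * ((m/4) * P * (2*qj) - m * Q * qjm1 * 1)) qj := by
      unfold Lr
      simpa [hc, hP, hQ] using ((((hasDerivAt_const qj (qjm1^2)).add (hsq qj)).const_mul ((m/4)*P)).sub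
        ((hasDerivAt_id qj).const_mul (m * Q * qjm1))).const_mul c
    simpa using this.deriv
  have d2 : deriv (fun x => Lr m h ω x qjp1) qj
      = c * ((m/4) * P * (2*qj) - m * Q * qjp1) := by
    have : HasDerivAt (fun x : ℝ => Lr m h ω x qjp1)
        (c * ((m/4) * P * (2*qj) - m * Q * qjp1 * 1)) qj := by
      unfold Lr
      have : HasDerivAt (fun x : ℝ => (m/4) * P * (x^2 + qjp1^2) - m * Q * x * qjp1)
          ((m/4) * P * (2*qj) - m * Q * qjp1 * 1) qj := by
        have h1 := (((hsq qj).add (hasDerivAt_const qj (qjp1^2))).const_mul ((m/4)*P))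
        have h2 : HasDerivAt (fun x : ℝ => m * Q * x * qjp1) (m * Q * qjp1 * 1) qj := by
          simpa [mul_comm, mul_assoc, mul_left_comm] using
            ((hasDerivAt_id qj).const_mul (m * Q * qjp1))
        have h3 := h1.sub h2
        simp only [add_zero, mul_one] at h3 ⊢
        exact h3
      simpa [hc, hP, hQ] using this.const_mul c
    simpa using this.deriv
  rw [d1, d2]
  have key : c * ((m/4) * P * (2*qj) - m * Q * qjm1) + c * ((m/4) * P * (2*qj) - m * Q * qjp1)
      = (-300 * m * h / ((h^2 * ω^2 - 30) * (h^2 * ω^2 - 10))) *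
        ((1/h^2) * (qjm1 - 2*qj + qjp1)
        + (ω^2/30) * (qjm1 + 28*qj + qjp1)
        + (ω^4 * h^2/1800) * (qjm1 - 92*qj + qjp1)
        + (ω^6 * h^4/1800) * qj) := by
    rw [hc, hP, hQ]
    field_simp
    ring
  rw [key, mul_eq_zero]
  have hne : -300 * m * h / ((h^2 * ω^2 - 30) * (h^2 * ω^2 - 10)) ≠ 0 := by
    apply div_ne_zero _ hδ
    positivity
  exact or_iff_right hne
end

section
/- If 0 < x < 42 − 6√29, then (x³ − 92x² + 1680x − 3600)² − 4(x² + 60x + 1800)² < 0. Equivalently, for h, ω > 0 with hω < √(42 − 6√29), the discriminant of the characteristic polynomial of the Lobatto scheme is negative. -/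
/-- Under the stability condition 0 < x < 42 − 6√29 (x = h²ω²), the discriminant
B̃² − 4Ã² of the characteristic polynomial of the Lobatto scheme is negative. -/
theorem lobatto_discriminant_neg (x : ℝ) (hx0 : 0 < x) (hx : x < 42 - 6 * Real.sqrt 29) :
    (x^3 - 92*x^2 + 1680*x - 3600)^2 - 4 * (x^2 + 60*x + 1800)^2 < 0 := by
  have hs : Real.sqrt 29 ^ 2 = 29 := Real.sq_sqrt (by norm_num)
  have hs5 : (5:ℝ) < Real.sqrt 29 := by
    nlinarith [Real.sqrt_nonneg 29]
  have hx10 : x < 10 := by nlinarith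
  -- x < 42 - 6√29 ⇒ (42 - x)² > 1044 ⇒ x² - 84x + 720 > 0
  have h1 : x^2 - 84*x + 720 > 0 := by nlinarith [Real.sqrt_nonneg 29]
  have h2 : x^2 - 90*x + 1800 > 0 := by nlinarith
  have hneg : (x - 10) * (x^2 - 84*x + 720) < 0 :=
    mul_neg_of_neg_of_pos (by linarith) h1
  have hpos : x * (x^2 - 90*x + 1800) > 0 := mul_pos hx0 h2
  nlinarith [mul_neg_of_pos_of_neg hpos hneg]
end

section
/- Let h, ω > 0 with hω < √(42 − 6√29), and set x = h²ω², Ã = x² + 60x + 1800, B̃ = x³ − 92x² + 1680x − 3600. Then every complex number z satisfying Ã z² + B̃ z + Ã = 0 has modulus |z| = 1. -/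
/-- General lemma: a palindromic real quadratic with negative discriminant has
unit-modulus complex roots. -/
lemma aux_unit_modulus (A B : ℝ) (hA : 0 < A) (hAB : B ^ 2 < 4 * A ^ 2) (z : ℂ)
    (hz : (A : ℂ) * z ^ 2 + (B : ℂ) * z + (A : ℂ) = 0) : ‖z‖ = 1 := by
  have hzc : (A : ℂ) * (starRingEnd ℂ z) ^ 2 + (B : ℂ) * (starRingEnd ℂ z) + (A : ℂ) = 0 := by
    have := congrArg (starRingEnd ℂ) hz
    simpa [map_add, map_mul, map_pow, Complex.conj_ofReal] using this
  have key : ((Complex.normSq z : ℂ) - 1) *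
      ((A : ℂ) * ((Complex.normSq z : ℂ) + 1) + (B : ℂ) * (starRingEnd ℂ z)) = 0 := by
    have hn : (Complex.normSq z : ℂ) = z * starRingEnd ℂ z := (Complex.mul_conj z).symm
    rw [hn]
    linear_combination (starRingEnd ℂ z) ^ 2 * hz - hzc
  rcases mul_eq_zero.mp key with h1 | h2
  · have h1' : (Complex.normSq z : ℂ) = 1 := sub_eq_zero.mp h1
    have : Complex.normSq z = 1 := by exact_mod_cast h1'
    rw [Complex.norm_def, this, Real.sqrt_one]
  · have hre := congrArg Complex.re h2
    have him := congrArg Complex.im h2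
    simp [Complex.add_re, Complex.mul_re, Complex.add_im, Complex.mul_im] at hre him
    have hns : 0 ≤ Complex.normSq z := Complex.normSq_nonneg z
    by_cases hB : B = 0
    · exfalso; rw [hB] at hre hAB; nlinarith
    · have hzim : z.im = 0 := by
        rcases him with h | h
        · exact absurd h hB
        · exact h
      have hr : z = (z.re : ℂ) := by
        apply Complex.ext <;> simp [hzim]
      rw [hr] at hz
      set r := z.re with hrdef
      have : ((A * r ^ 2 + B * r + A : ℝ) : ℂ) = 0 := by
        push_cast
        linear_combination hz
      have hreal : A * r ^ 2 + B * r + A = 0 := by exact_mod_cast this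
      nlinarith [sq_nonneg (2 * A * r + B)]

/-- Under the stability condition hω < √(42 − 6√29), every complex root of the
characteristic polynomial Ã z² + B̃ z + Ã of the Lobatto scheme has modulus one. -/
theorem lobatto_roots_unit_modulus (h ω : ℝ) (hh : 0 < h) (hω : 0 < ω)
    (hstab : h * ω < Real.sqrt (42 - 6 * Real.sqrt 29)) (z : ℂ)
    (hz : ((h^2 * ω^2)^2 + 60 * (h^2 * ω^2) + 1800 : ℝ) * z^2
        + ((h^2 * ω^2)^3 - 92 * (h^2 * ω^2)^2 + 1680 * (h^2 * ω^2) - 3600 : ℝ) * z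
        + ((h^2 * ω^2)^2 + 60 * (h^2 * ω^2) + 1800 : ℝ) = 0) :
    ‖z‖ = 1 := by
  set x : ℝ := h ^ 2 * ω ^ 2 with hxdef
  have hs : Real.sqrt 29 ^ 2 = 29 := Real.sq_sqrt (by norm_num)
  have hs0 : 0 ≤ Real.sqrt 29 := Real.sqrt_nonneg 29
  have hs5 : 5 < Real.sqrt 29 := by nlinarith
  have hnn : 0 ≤ 42 - 6 * Real.sqrt 29 := by nlinarith
  have hx0 : 0 < x := by positivity
  have hxlt : x < 42 - 6 * Real.sqrt 29 := by
    have h1 : (h * ω) ^ 2 < Real.sqrt (42 - 6 * Real.sqrt 29) ^ 2 := by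
      apply pow_lt_pow_left₀ hstab (by positivity)
      norm_num
    rw [Real.sq_sqrt hnn] at h1
    calc x = (h * ω) ^ 2 := by ring
    _ < _ := h1
  have hx10 : x < 10 := by nlinarith
  set A : ℝ := x ^ 2 + 60 * x + 1800 with hAdef
  set B : ℝ := x ^ 3 - 92 * x ^ 2 + 1680 * x - 3600 with hBdef
  have hA : 0 < A := by nlinarith
  have hq : 0 < x ^ 2 - 84 * x + 720 := by
    nlinarith [mul_pos (show (0:ℝ) < 42 - 6 * Real.sqrt 29 - x by linarith)
      (show (0:ℝ) < 42 + 6 * Real.sqrt 29 - x by nlinarith)]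
  have h1 : 0 < B + 2 * A := by nlinarith [mul_pos (mul_pos hx0
    (show (0:ℝ) < 30 - x by linarith)) (show (0:ℝ) < 60 - x by linarith)]
  have h2 : B - 2 * A < 0 := by nlinarith [mul_pos (show (0:ℝ) < 10 - x by linarith) hq]
  have hAB : B ^ 2 < 4 * A ^ 2 := by nlinarith [mul_pos h1 (show (0:ℝ) < 2 * A - B by linarith)]
  exact aux_unit_modulus A B hA hAB z (by
    convert hz using 2)
end

section
/- Let h, ω > 0 and m > 0, and define δ̃ = 1 + h²ω²/30 + h⁴ω⁴/1800, a = 1 − (7/15)h²ω² + (23/900)h⁴ω⁴ − (1/3600)h⁶ω⁶, b = (mhω²/43200)(h²ω²−60)(h⁴ω⁴−84h²ω²+720), c = (h/m)(1 − (2/15)h²ω² + (1/300)h⁴ω⁴). Then a² − bc = δ̃², and consequently the 2×2 update matrix Φ = (1/δ̃)[[a, b],[c, a]] of the Lobatto scheme has determinant 1, i.e. the scheme is symplectic. -/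
/-- For the Lobatto update matrix Φ = (1/δ̃)[[a, b],[c, a]] of the harmonic oscillator
scheme, a² − bc = δ̃², hence det Φ = 1 and the scheme is symplectic. -/
theorem lobatto_symplectic (h ω m : ℝ) (hh : 0 < h) (hω : 0 < ω) (hm : 0 < m) :
    let δ : ℝ := 1 + h^2*ω^2/30 + h^4*ω^4/1800
    let a : ℝ := 1 - (7/15)*h^2*ω^2 + (23/900)*h^4*ω^4 - (1/3600)*h^6*ω^6
    let b : ℝ := (m*h*ω^2/43200) * (h^2*ω^2 - 60) * (h^4*ω^4 - 84*h^2*ω^2 + 720)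
    let c : ℝ := (h/m) * (1 - (2/15)*h^2*ω^2 + (1/300)*h^4*ω^4)
    a^2 - b*c = δ^2 ∧ (!![a/δ, b/δ; c/δ, a/δ] : Matrix (Fin 2) (Fin 2) ℝ).det = 1 := by
  intro δ a b c
  have hm' : m ≠ 0 := hm.ne'
  have hδ : δ ≠ 0 := by positivity
  have key : a^2 - b*c = δ^2 := by
    show (1 - (7/15)*h^2*ω^2 + (23/900)*h^4*ω^4 - (1/3600)*h^6*ω^6)^2 -
      ((m*h*ω^2/43200) * (h^2*ω^2 - 60) * (h^4*ω^4 - 84*h^2*ω^2 + 720)) *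
      ((h/m) * (1 - (2/15)*h^2*ω^2 + (1/300)*h^4*ω^4)) =
      (1 + h^2*ω^2/30 + h^4*ω^4/1800)^2
    field_simp
    ring
  refine ⟨key, ?_⟩
  rw [Matrix.det_fin_two_of]
  field_simp
  linarith [key]
end

section
/- Let h, ω > 0 and m > 0, with δ̃, a, b, c as in the Lobatto scheme for the harmonic oscillator, and define the discrete energy H_d(p, q) = (c/(2δ̃))p² − (b/(2δ̃))q². If p′ = (a p + b q)/δ̃ and q′ = (c p + a q)/δ̃, then H_d(p′, q′) = H_d(p, q); that is, the Lobatto scheme exactly preserves the discrete energy H_d. -/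
/-- The Lobatto scheme for the harmonic oscillator exactly preserves the discrete
energy H_d(p, q) = (c/(2δ̃))p² − (b/(2δ̃))q². -/
theorem lobatto_preserves_discrete_energy (h ω m : ℝ) (hh : 0 < h) (hω : 0 < ω)
    (hm : 0 < m) (p q : ℝ) :
    let δ : ℝ := 1 + h^2*ω^2/30 + h^4*ω^4/1800
    let a : ℝ := 1 - (7/15)*h^2*ω^2 + (23/900)*h^4*ω^4 - (1/3600)*h^6*ω^6
    let b : ℝ := (m*h*ω^2/43200) * (h^2*ω^2 - 60) * (h^4*ω^4 - 84*h^2*ω^2 + 720)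
    let c : ℝ := (h/m) * (1 - (2/15)*h^2*ω^2 + (1/300)*h^4*ω^4)
    let Hd : ℝ → ℝ → ℝ := fun p q => (c/(2*δ)) * p^2 - (b/(2*δ)) * q^2
    Hd ((a*p + b*q)/δ) ((c*p + a*q)/δ) = Hd p q := by
  intro δ a b c Hd
  have hm' : m ≠ 0 := hm.ne'
  have hδ : δ ≠ 0 := by positivity
  have key : a^2 - b*c = δ^2 := by
    simp only [δ, a, b, c]
    field_simp
    ring
  clear_value δ a b c
  simp only [Hd]
  field_simp
  linear_combination (c*p^2 - b*q^2) * key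
end

section
/- Let m, h, ω > 0 with hω < √(42 − 6√29). Then b = (mhω²/43200)(h²ω²−60)(h⁴ω⁴−84h²ω²+720) satisfies b < 0 (equivalently −b > 0), so the coefficient of q² in the preserved discrete energy H_d(p,q) = (c/(2δ̃))p² − (b/(2δ̃))q² is positive. -/
/-- Under the stability condition hω < √(42 − 6√29), the coefficient
b = (mhω²/43200)(h²ω²−60)(h⁴ω⁴−84h²ω²+720) is negative, so the coefficient of q² in
the preserved discrete energy is positive. -/
theorem lobatto_b_neg (m h ω : ℝ) (hm : 0 < m) (hh : 0 < h) (hω : 0 < ω)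
    (hstab : h * ω < Real.sqrt (42 - 6 * Real.sqrt 29)) :
    (m*h*ω^2/43200) * (h^2*ω^2 - 60) * (h^4*ω^4 - 84*h^2*ω^2 + 720) < 0 := by
  have hs29 : Real.sqrt 29 < 6 := by
    rw [show (6:ℝ) = Real.sqrt 36 by
      rw [show (36:ℝ) = 6^2 by norm_num, Real.sqrt_sq (by norm_num)]]
    exact Real.sqrt_lt_sqrt (by norm_num) (by norm_num)
  have hs29' : (0:ℝ) < Real.sqrt 29 := Real.sqrt_pos.mpr (by norm_num)
  have hsq29 : Real.sqrt 29 ^ 2 = 29 := Real.sq_sqrt (by norm_num)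
  have hx : h^2 * ω^2 < 42 - 6 * Real.sqrt 29 := by
    have h1 : (h*ω)^2 < Real.sqrt (42 - 6 * Real.sqrt 29) ^ 2 := by
      apply pow_lt_pow_left₀ hstab (by positivity) (by norm_num)
    rw [Real.sq_sqrt (by nlinarith)] at h1
    nlinarith
  have h2 : h^2 * ω^2 - 60 < 0 := by nlinarith
  have h3 : 0 < h^4*ω^4 - 84*h^2*ω^2 + 720 := by nlinarith [sq_nonneg (42 - h^2*ω^2 - 6*Real.sqrt 29)]
  have h4 : 0 < m*h*ω^2/43200 := by positivity
  nlinarith [mul_pos h4 h3]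
end

section
/- Let m, h, ω > 0 with h²ω² ≠ 10 and h⁴ω⁴ − 84h²ω² + 720 ≠ 0, and let (p_j)_{j∈ℤ}, (q_j)_{j∈ℤ} be real sequences satisfying, for every j, both (p_{j+1} − p_j)/h = −mω² (h²ω² − 60)/(12(h²ω² − 10)) · (q_j + q_{j+1}) and (q_{j+1} − q_j)/h = 24(30 − h²ω²)/(h⁴ω⁴ − 84h²ω² + 720) · (p_j + p_{j+1})/(2m). Then for every j, (1/h²)(q_{j−1} − 2q_j + q_{j+1}) + (ω²/30)(q_{j−1} + 28q_j + q_{j+1}) + (ω⁴h²/1800)(q_{j−1} − 92q_j + q_{j+1}) + (ω⁶h⁴/1800) q_j = 0. -/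
/-- Eliminating the momentum from the momentum–state form of the Lobatto scheme for the
harmonic oscillator yields the three-point scheme in the state variable. -/
theorem lobatto_momentum_state_implies_three_point (m h ω : ℝ)
    (hm : 0 < m) (hh : 0 < h) (hω : 0 < ω)
    (h10 : h^2 * ω^2 ≠ 10) (h720 : h^4 * ω^4 - 84 * h^2 * ω^2 + 720 ≠ 0)
    (p q : ℤ → ℝ)
    (hp : ∀ j : ℤ, (p (j+1) - p j) / h
        = -m * ω^2 * ((h^2 * ω^2 - 60) / (12 * (h^2 * ω^2 - 10))) * (q j + q (j+1)))
    (hq : ∀ j : ℤ, (q (j+1) - q j) / h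
        = 24 * (30 - h^2 * ω^2) / (h^4 * ω^4 - 84 * h^2 * ω^2 + 720)
            * ((p j + p (j+1)) / (2*m))) :
    ∀ j : ℤ, (1/h^2) * (q (j-1) - 2 * q j + q (j+1))
        + (ω^2/30) * (q (j-1) + 28 * q j + q (j+1))
        + (ω^4 * h^2/1800) * (q (j-1) - 92 * q j + q (j+1))
        + (ω^6 * h^4/1800) * q j = 0 := by
  intro j
  have hhn : h ≠ 0 := hh.ne'
  have hmn : m ≠ 0 := hm.ne'
  have hE : h^2*ω^2 - 10 ≠ 0 := sub_ne_zero.mpr h10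
  have hj : j - 1 + 1 = j := by ring
  have e1 := hp (j-1); rw [hj] at e1
  have e2 := hp j
  have e3 := hq (j-1); rw [hj] at e3
  have e4 := hq j
  have hD' : h^2*ω^2*(h^2*ω^2-84)+720 ≠ 0 := by ring_nf; ring_nf at h720; exact h720
  field_simp at e1 e2 e3 e4 ⊢
  set E := h^2 * ω^2 with hEdef
  set D := h^4 * ω^4 - 84 * h^2 * ω^2 + 720 with hDdef
  have key2 : (1800*(q (j-1) - 2*q j + q (j+1)) + 60*E*(q (j-1) + 28*q j + q (j+1))
      + E^2*(q (j-1) - 92*q j + q (j+1)) + E^3*(q j)) * (24*m*D*(E-10)) = 0 := by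
    have hE2 : ω^2 * h^2 = E := by rw [hEdef]; ring
    have hD2 : D = E^2 - 84*E + 720 := by rw [hDdef, hEdef]; ring
    linear_combination (((7200-1560*E+94*E^2-E^3)/4) * (12*(E-10))) * e4
      - (((7200-1560*E+94*E^2-E^3)/4) * (12*(E-10))) * e3
      + (((7200-1560*E+94*E^2-E^3)/4) * (24*(30-E)*h)) * e1
      + (((7200-1560*E+94*E^2-E^3)/4) * (24*(30-E)*h)) * e2
      + ((q (j-1) + 2*q j + q (j+1)) * 6 * m * (7200-1560*E+94*E^2-E^3) * (30-E) * (E-60)) * hE2.symm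
      + 0 * hD2
  have hne : (24*m*D*(E-10)) ≠ 0 := by
    apply mul_ne_zero
    apply mul_ne_zero
    · positivity
    · exact h720
    · exact sub_ne_zero.mpr h10
  have key := (mul_eq_zero.mp key2).resolve_right hne
  have hE2 : ω^2 * h^2 = E := by rw [hEdef]; ring
  have hE4 : ω^4 * h^4 = E^2 := by rw [hEdef]; ring
  have hE6 : ω^6 * h^6 = E^3 := by rw [hEdef]; ring
  linear_combination (30:ℝ) * key + 1800*(q (j-1)+28*q j+q (j+1))*hE2
    + 30*(q (j-1)-92*q j+q (j+1))*hE4 + 30*(q j)*hE6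
end
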